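/- Let ũ be the sequence ũ_ℓ := (−1)^ℓ ε/(2√2). Then ũ ∈ U, ‖Dũ‖²_{ℓ²ε} = 1, and Q^a(ũ) = φ''_F + 2G'_F ρ''_F. -/

import Mathlib

open Finset

noncomputable section

/-- `u` is `2N`-periodic. -/
def IsPer (N : ℤ) (u : ℤ → ℝ) : Prop := ∀ ℓ : ℤ, u (ℓ + 2*N) = u ℓ

/-- `u` belongs to the displacement space `U`: `2N`-periodic with zero mean. -/
def InU (N : ℤ) (u : ℤ → ℝ) : Prop :=
  IsPer N u ∧ ∑ ℓ ∈ Finset.Icc (-N+1) N, u ℓ = 0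

/-- the scaled reference atomic spacing `ε = 1/N`. -/
def eps (N : ℤ) : ℝ := 1 / (N : ℝ)

/-- discrete derivative `(Dv)_ℓ = (v_ℓ - v_{ℓ-1})/ε`. -/
def Dd (N : ℤ) (v : ℤ → ℝ) : ℤ → ℝ := fun ℓ => (v ℓ - v (ℓ-1)) / eps N

/-- squared `ℓ²ε` norm: `ε Σ_{ℓ=-N+1}^{N} v_ℓ²`. -/
def nrm2 (N : ℤ) (v : ℤ → ℝ) : ℝ := eps N * ∑ ℓ ∈ Finset.Icc (-N+1) N, (v ℓ)^2

/-- the atomistic second-variation quadratic form `Q^a`. -/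
def Qa (N : ℤ) (pF p2F rF r2F rrF rr2F g1 g2 : ℝ) (u : ℤ → ℝ) : ℝ :=
  eps N * ∑ ℓ ∈ Finset.Icc (-N+1) N,
    (g2 * (rF * (Dd N u ℓ + Dd N u (ℓ+1))
        + r2F * (Dd N u (ℓ-1) + Dd N u ℓ + Dd N u (ℓ+1) + Dd N u (ℓ+2)))^2
     + g1 * (rrF * (Dd N u ℓ)^2 + rr2F * (Dd N u ℓ + Dd N u (ℓ-1))^2
           + rrF * (Dd N u (ℓ+1))^2 + rr2F * (Dd N u (ℓ+1) + Dd N u (ℓ+2))^2)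
     + (1/2) * (pF * ((Dd N u ℓ)^2 + (Dd N u (ℓ+1))^2)
           + p2F * ((Dd N u ℓ + Dd N u (ℓ-1))^2 + (Dd N u (ℓ+1) + Dd N u (ℓ+2))^2)))

lemma neg_one_zpow_sq (ℓ : ℤ) : ((-1:ℝ)^ℓ)^2 = 1 := by
  rcases Int.even_or_odd ℓ with h | h
  · rw [h.neg_one_zpow]; norm_num
  · rw [h.neg_one_zpow]; norm_num

lemma neg_one_zpow_succ (ℓ : ℤ) : (-1:ℝ)^(ℓ+1) = -(-1:ℝ)^ℓ := by
  rw [zpow_add₀ (by norm_num : (-1:ℝ) ≠ 0)]; simp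

lemma neg_one_zpow_pred (ℓ : ℤ) : (-1:ℝ)^(ℓ-1) = -(-1:ℝ)^ℓ := by
  rw [zpow_sub₀ (by norm_num : (-1:ℝ) ≠ 0)]; simp [div_neg]

lemma neg_one_zpow_neg' (n : ℤ) : (-1:ℝ)^(-n) = (-1:ℝ)^n := by
  rcases Int.even_or_odd n with h | h
  · rw [h.neg_one_zpow, (h.neg).neg_one_zpow]
  · rw [h.neg_one_zpow, (h.neg).neg_one_zpow]

lemma alt_sum (N : ℤ) (hN : 1 ≤ N) :
    ∑ ℓ ∈ Finset.Icc (-N+1) N, (-1:ℝ)^ℓ = 0 := by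
  refine Int.le_induction (motive := fun n _ => ∑ ℓ ∈ Finset.Icc (-n+1) n, (-1:ℝ)^ℓ = 0) ?_ ?_ N hN
  · show ∑ ℓ ∈ Finset.Icc (-1+1 : ℤ) 1, (-1:ℝ)^ℓ = 0
    have : Finset.Icc (-1+1 : ℤ) 1 = {0, 1} := by decide
    rw [this]; simp
  · intro N hN ih
    show ∑ ℓ ∈ Finset.Icc (-(N+1)+1) (N+1), (-1:ℝ)^ℓ = 0
    have hset : Finset.Icc (-(N+1)+1) (N+1)
        = insert (-N) (insert (N+1) (Finset.Icc (-N+1) N)) := by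
      ext x
      simp only [Finset.mem_Icc, Finset.mem_insert]
      omega
    have hm1 : (-N) ∉ insert (N+1) (Finset.Icc (-N+1) N) := by
      simp only [Finset.mem_insert, Finset.mem_Icc]
      omega
    have hm2 : (N+1) ∉ Finset.Icc (-N+1) N := by
      simp only [Finset.mem_Icc]
      omega
    rw [hset, Finset.sum_insert hm1, Finset.sum_insert hm2, ih,
      neg_one_zpow_neg', neg_one_zpow_succ]
    ring

lemma card_Icc_real (N : ℤ) (hN : 1 ≤ N) :
    ((Finset.Icc (-N+1) N).card : ℝ) = 2 * N := by
  rw [Int.card_Icc]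
  have : (N + 1 - (-N+1)) = 2 * N := by ring
  rw [this]
  exact_mod_cast Int.toNat_of_nonneg (show (0:ℤ) ≤ 2*N by omega)

lemma Dd_eq (N : ℤ) (hN : 1 ≤ N) (ℓ : ℤ) :
    Dd N (fun ℓ : ℤ => (-1:ℝ)^ℓ * eps N / (2 * Real.sqrt 2)) ℓ
      = (-1:ℝ)^ℓ / Real.sqrt 2 := by
  have hNne : (N : ℝ) ≠ 0 := by
    exact_mod_cast (by omega : N ≠ 0)
  have hε : eps N ≠ 0 := by simp [eps, hNne]
  have hs : Real.sqrt 2 ≠ 0 := by positivity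
  simp only [Dd, neg_one_zpow_pred]
  field_simp
  ring

/-- the oscillatory displacement `ũ_ℓ = (-1)^ℓ ε/(2√2)`. -/
theorem oscillatory_test_function (N : ℤ) (hN : 1 ≤ N)
    (pF p2F rF r2F rrF rr2F g1 g2 : ℝ) :
    InU N (fun ℓ : ℤ => (-1:ℝ)^ℓ * eps N / (2 * Real.sqrt 2)) ∧
    nrm2 N (Dd N (fun ℓ : ℤ => (-1:ℝ)^ℓ * eps N / (2 * Real.sqrt 2))) = 1 ∧
    Qa N pF p2F rF r2F rrF rr2F g1 g2 (fun ℓ : ℤ => (-1:ℝ)^ℓ * eps N / (2 * Real.sqrt 2)) = pF + 2*g1*rrF := by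
  have hNne : (N : ℝ) ≠ 0 := by exact_mod_cast (by omega : N ≠ 0)
  have hs : Real.sqrt 2 ≠ 0 := by positivity
  have hs2 : (Real.sqrt 2)^2 = 2 := Real.sq_sqrt (by norm_num)
  have hepsN : eps N * (N : ℝ) = 1 := by
    rw [eps, one_div, inv_mul_cancel₀ hNne]
  refine ⟨⟨?_, ?_⟩, ?_, ?_⟩
  · intro ℓ
    have h2N : Even (2*N) := even_two_mul N
    simp only
    rw [zpow_add₀ (by norm_num : (-1:ℝ) ≠ 0), h2N.neg_one_zpow, mul_one]
  · show ∑ ℓ ∈ Finset.Icc (-N+1) N, (-1:ℝ)^ℓ * eps N / (2 * Real.sqrt 2) = 0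
    rw [show (∑ ℓ ∈ Finset.Icc (-N+1) N, (-1:ℝ)^ℓ * eps N / (2 * Real.sqrt 2))
        = (∑ ℓ ∈ Finset.Icc (-N+1) N, (-1:ℝ)^ℓ) * (eps N / (2 * Real.sqrt 2)) by
      rw [Finset.sum_mul]; exact Finset.sum_congr rfl fun ℓ _ => by ring]
    rw [alt_sum N hN, zero_mul]
  · unfold nrm2
    have h : ∀ ℓ ∈ Finset.Icc (-N+1) N,
        (Dd N (fun ℓ : ℤ => (-1:ℝ)^ℓ * eps N / (2 * Real.sqrt 2)) ℓ)^2 = 1/2 := by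
      intro ℓ _
      rw [Dd_eq N hN, div_pow, neg_one_zpow_sq, hs2]
    rw [Finset.sum_congr rfl h, Finset.sum_const, nsmul_eq_mul, card_Icc_real N hN]
    rw [show eps N * (2 * (N:ℝ) * (1/2)) = eps N * (N:ℝ) by ring, hepsN]
  · unfold Qa
    have h : ∀ ℓ ∈ Finset.Icc (-N+1) N,
        (g2 * (rF * (Dd N (fun ℓ : ℤ => (-1:ℝ)^ℓ * eps N / (2 * Real.sqrt 2)) ℓ + Dd N (fun ℓ : ℤ => (-1:ℝ)^ℓ * eps N / (2 * Real.sqrt 2)) (ℓ+1))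
            + r2F * (Dd N (fun ℓ : ℤ => (-1:ℝ)^ℓ * eps N / (2 * Real.sqrt 2)) (ℓ-1) + Dd N (fun ℓ : ℤ => (-1:ℝ)^ℓ * eps N / (2 * Real.sqrt 2)) ℓ + Dd N (fun ℓ : ℤ => (-1:ℝ)^ℓ * eps N / (2 * Real.sqrt 2)) (ℓ+1) + Dd N (fun ℓ : ℤ => (-1:ℝ)^ℓ * eps N / (2 * Real.sqrt 2)) (ℓ+2)))^2
         + g1 * (rrF * (Dd N (fun ℓ : ℤ => (-1:ℝ)^ℓ * eps N / (2 * Real.sqrt 2)) ℓ)^2 + rr2F * (Dd N (fun ℓ : ℤ => (-1:ℝ)^ℓ * eps N / (2 * Real.sqrt 2)) ℓ + Dd N (fun ℓ : ℤ => (-1:ℝ)^ℓ * eps N / (2 * Real.sqrt 2)) (ℓ-1))^2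
               + rrF * (Dd N (fun ℓ : ℤ => (-1:ℝ)^ℓ * eps N / (2 * Real.sqrt 2)) (ℓ+1))^2 + rr2F * (Dd N (fun ℓ : ℤ => (-1:ℝ)^ℓ * eps N / (2 * Real.sqrt 2)) (ℓ+1) + Dd N (fun ℓ : ℤ => (-1:ℝ)^ℓ * eps N / (2 * Real.sqrt 2)) (ℓ+2))^2)
         + (1/2) * (pF * ((Dd N (fun ℓ : ℤ => (-1:ℝ)^ℓ * eps N / (2 * Real.sqrt 2)) ℓ)^2 + (Dd N (fun ℓ : ℤ => (-1:ℝ)^ℓ * eps N / (2 * Real.sqrt 2)) (ℓ+1))^2)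
               + p2F * ((Dd N (fun ℓ : ℤ => (-1:ℝ)^ℓ * eps N / (2 * Real.sqrt 2)) ℓ + Dd N (fun ℓ : ℤ => (-1:ℝ)^ℓ * eps N / (2 * Real.sqrt 2)) (ℓ-1))^2 + (Dd N (fun ℓ : ℤ => (-1:ℝ)^ℓ * eps N / (2 * Real.sqrt 2)) (ℓ+1) + Dd N (fun ℓ : ℤ => (-1:ℝ)^ℓ * eps N / (2 * Real.sqrt 2)) (ℓ+2))^2)))
        = g1 * rrF + pF * (1/2) := by
      intro ℓ _
      rw [Dd_eq N hN ℓ, Dd_eq N hN (ℓ+1), Dd_eq N hN (ℓ-1), Dd_eq N hN (ℓ+2)]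
      rw [show ℓ+2 = (ℓ+1)+1 by ring, neg_one_zpow_succ (ℓ+1), neg_one_zpow_succ ℓ,
        neg_one_zpow_pred ℓ]
      have hx : ((-1:ℝ)^ℓ / Real.sqrt 2)^2 = 1/2 := by
        rw [div_pow, neg_one_zpow_sq, hs2]
      set x : ℝ := (-1:ℝ)^ℓ / Real.sqrt 2 with hxdef
      have hrw : - -(-1:ℝ)^ℓ / Real.sqrt 2 = x := by rw [hxdef]; ring
      have hrw2 : -(-1:ℝ)^ℓ / Real.sqrt 2 = -x := by rw [hxdef]; ring
      rw [hrw, hrw2]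
      linear_combination (2*g1*rrF + pF) * hx
    rw [Finset.sum_congr rfl h, Finset.sum_const, nsmul_eq_mul, card_Icc_real N hN]
    rw [show eps N * (2 * (N:ℝ) * (g1 * rrF + pF * (1/2)))
        = (eps N * (N:ℝ)) * (2*g1*rrF + pF) by ring, hepsN]
    ring
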